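/- Let (X,d) be a geodesic metric space, U ⊂ X bounded open, and u: closure(U) → ℝ continuous and Lipschitz on U. Suppose that sup_{x∈V} Lip_d u(x) ≤ Lip_d(u, ∂V) for every open V compactly contained in U (this holds for absolute minimizers). Then for every open V compactly contained in U, Lip_d(u, V) = Lip_d(u, ∂V). -/

import Mathlib

open Filter Metric Set

/-- `(X,d)` is a geodesic space: any two points are joined by an isometric
parametrization of an interval of length `dist x y`. -/
def IsGeodesicSpace (X : Type*) [MetricSpace X] : Prop :=
  ∀ x y : X, ∃ γ : ℝ → X, γ 0 = x ∧ γ (dist x y) = y ∧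
    ∀ s ∈ Set.Icc (0 : ℝ) (dist x y), ∀ t ∈ Set.Icc (0 : ℝ) (dist x y),
      dist (γ s) (γ t) = |s - t|

/-- The Lipschitz constant of `u` on a set `K`:
`Lip(u, K) = sup_{x ≠ y ∈ K} |u x - u y| / d(x,y)`. -/
noncomputable def lipOn {X : Type*} [MetricSpace X] (u : X → ℝ) (K : Set X) : ℝ :=
  sSup { r : ℝ | ∃ x ∈ K, ∃ y ∈ K, x ≠ y ∧ r = |u x - u y| / dist x y }

/-- The pointwise Lipschitz constant
`Lip u (x) = limsup_{y → x} |u y - u x| / d(x,y)`. -/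
noncomputable def ptLip {X : Type*} [MetricSpace X] (u : X → ℝ) (x : X) : ℝ :=
  Filter.limsup (fun y => |u y - u x| / dist x y) (nhdsWithin x {x}ᶜ)

/-- 1-D lemma: pointwise right Lipschitz bound integrates to a global bound. -/
lemma key_oneDim {f : ℝ → ℝ} {a b L : ℝ} (hab : a ≤ b) (hL : 0 ≤ L)
    (hc : ContinuousOn f (Set.Icc a b))
    (hd : ∀ t ∈ Set.Ico a b, ∀ ε > 0, ∃ δ > 0, ∀ s ∈ Set.Icc a b,
      t < s → s ≤ t + δ → |f s - f t| ≤ (L + ε) * (s - t)) :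
    |f b - f a| ≤ L * (b - a) := by
  rcases eq_or_lt_of_le hab with rfl | hab'
  · simp
  have main : ∀ ε > 0, |f b - f a| ≤ (L + ε) * (b - a) := by
    intro ε hε
    set T := {t ∈ Set.Icc a b | |f t - f a| ≤ (L + ε) * (t - a)} with hTdef
    have haT : a ∈ T := ⟨⟨le_refl a, hab⟩, by simp⟩
    have hTne : T.Nonempty := ⟨a, haT⟩
    have hTbdd : BddAbove T := ⟨b, fun t ht => ht.1.2⟩
    have hTclosed : IsClosed T := by
      have hEq : T = Set.Icc a b ∩
          (fun t => |f t - f a| - (L + ε) * (t - a)) ⁻¹' Set.Iic 0 := by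
        ext t
        simp only [hTdef, Set.mem_setOf_eq, Set.mem_inter_iff, Set.mem_preimage,
          Set.mem_Iic, sub_nonpos]
      rw [hEq]
      refine ContinuousOn.preimage_isClosed_of_isClosed ?_ isClosed_Icc isClosed_Iic
      exact ((hc.sub continuousOn_const).abs).sub
        (Continuous.continuousOn (by continuity))
    set c := sSup T with hcdef
    have hcT : c ∈ T := hTclosed.csSup_mem hTne hTbdd
    by_cases hcb : c = b
    · have := hcT.2
      rwa [hcb] at this
    · exfalso
      have hclt : c < b := lt_of_le_of_ne hcT.1.2 hcb
      obtain ⟨δ, hδ, hδ'⟩ := hd c ⟨hcT.1.1, hclt⟩ ε hε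
      set s := min (c + δ) b with hsdef
      have hs1 : c < s := lt_min (by linarith) hclt
      have hsIcc : s ∈ Set.Icc a b := ⟨le_trans hcT.1.1 hs1.le, min_le_right _ _⟩
      have hstep := hδ' s hsIcc hs1 (min_le_left _ _)
      have hsT : s ∈ T := by
        refine ⟨hsIcc, ?_⟩
        have htri : |f s - f a| ≤ |f s - f c| + |f c - f a| := abs_sub_le _ _ _
        have := hcT.2
        nlinarith
      exact absurd (le_csSup hTbdd hsT) (not_le.2 hs1)
  refine le_of_forall_pos_le_add fun ε hε => ?_
  have h := main (ε / (b - a)) (div_pos hε (by linarith))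
  have : (L + ε / (b - a)) * (b - a) = L * (b - a) + ε := by
    rw [add_mul, div_mul_cancel₀ ε (by linarith : b - a ≠ 0)]
  linarith [h, this.symm.le]

/-- From a pointwise Lipschitz bound, extract an ε-δ estimate. -/
lemma ptLip_eps {X : Type*} [MetricSpace X] {u : X → ℝ} {p : X} {L B : ℝ}
    (hb : ∀ᶠ z in nhdsWithin p {p}ᶜ, |u z - u p| / dist p z ≤ B)
    (h : ptLip u p ≤ L) {ε : ℝ} (hε : 0 < ε) :
    ∃ δ > 0, ∀ z, z ≠ p → dist p z ≤ δ → |u z - u p| ≤ (L + ε) * dist p z := by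
  have hlt : Filter.limsup (fun y => |u y - u p| / dist p y)
      (nhdsWithin p {p}ᶜ) < L + ε := lt_of_le_of_lt h (by linarith)
  have hbdd : Filter.IsBoundedUnder (· ≤ ·) (nhdsWithin p {p}ᶜ)
      (fun y => |u y - u p| / dist p y) := ⟨B, eventually_map.2 hb⟩
  have hev := Filter.eventually_lt_of_limsup_lt hlt hbdd
  rw [Filter.eventually_iff, mem_nhdsWithin_iff] at hev
  obtain ⟨δ, hδ, hsub⟩ := hev
  refine ⟨δ / 2, by linarith, fun z hz hdz => ?_⟩
  have hz' : z ∈ ball p δ ∩ {p}ᶜ := by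
    constructor
    · rw [mem_ball, dist_comm]; linarith
    · simpa using hz
  have hq : |u z - u p| / dist p z < L + ε := hsub hz'
  have hdp : 0 < dist p z := by
    rw [dist_comm]; exact dist_pos.2 hz
  calc |u z - u p| = |u z - u p| / dist p z * dist p z := by field_simp
    _ ≤ (L + ε) * dist p z := by
        exact mul_le_mul_of_nonneg_right hq.le hdp.le

theorem lipOn_eq_lipOn_frontier {X : Type*} [MetricSpace X]
    (hgeo : IsGeodesicSpace X)
    (U : Set X) (hUo : IsOpen U) (hUb : Bornology.IsBounded U)
    (u : X → ℝ) (hc : ContinuousOn u (closure U))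
    (hlip : ∃ K : NNReal, LipschitzOnWith K u U)
    (hmin : ∀ V : Set X, IsOpen V → closure V ⊆ U → IsCompact (closure V) →
      ∀ x ∈ V, ptLip u x ≤ lipOn u (frontier V)) :
    ∀ V : Set X, IsOpen V → closure V ⊆ U → IsCompact (closure V) →
      lipOn u V = lipOn u (frontier V) := by
  obtain ⟨K, hK⟩ := hlip
  intro V hVo hVcl hVcomp
  have hVU : V ⊆ U := subset_closure.trans hVcl
  have hfU : frontier V ⊆ U := frontier_subset_closure.trans hVcl
  -- boundedness of the lipOn sets
  have hbd : ∀ S : Set X, S ⊆ U → ∀ r ∈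
      { r : ℝ | ∃ x ∈ S, ∃ y ∈ S, x ≠ y ∧ r = |u x - u y| / dist x y }, r ≤ (K : ℝ) := by
    rintro S hS r ⟨x, hx, y, hy, hxy, rfl⟩
    have hdp : 0 < dist x y := dist_pos.2 hxy
    rw [div_le_iff₀ hdp]
    have := hK.dist_le_mul x (hS hx) y (hS hy)
    rwa [Real.dist_eq] at this
  have hbddV : BddAbove { r : ℝ | ∃ x ∈ V, ∃ y ∈ V, x ≠ y ∧ r = |u x - u y| / dist x y } :=
    ⟨K, fun r hr => hbd V hVU r hr⟩
  have hbddF : BddAbove { r : ℝ | ∃ x ∈ frontier V, ∃ y ∈ frontier V, x ≠ y ∧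
      r = |u x - u y| / dist x y } := ⟨K, fun r hr => hbd _ hfU r hr⟩
  have hnonneg : ∀ S : Set X, ∀ r ∈
      { r : ℝ | ∃ x ∈ S, ∃ y ∈ S, x ≠ y ∧ r = |u x - u y| / dist x y }, 0 ≤ r := by
    rintro S r ⟨x, hx, y, hy, hxy, rfl⟩
    exact div_nonneg (abs_nonneg _) dist_nonneg
  set L := lipOn u (frontier V) with hLdef
  have hL0 : 0 ≤ L := Real.sSup_nonneg (hnonneg _)
  have hM0 : 0 ≤ lipOn u V := Real.sSup_nonneg (hnonneg _)
  -- continuity of u at points of closure V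
  have contAt : ∀ p ∈ closure V, ContinuousAt u p := by
    intro p hp
    exact hc.continuousAt (mem_of_superset (hUo.mem_nhds (hVcl hp)) subset_closure)
  -- eventual bound near points of U
  have hnear : ∀ p ∈ U, ∀ᶠ z in nhdsWithin p {p}ᶜ, |u z - u p| / dist p z ≤ (K : ℝ) := by
    intro p hp
    obtain ⟨r, hr, hball⟩ := Metric.isOpen_iff.1 hUo p hp
    have hmem : ball p r ∩ {p}ᶜ ∈ nhdsWithin p {p}ᶜ :=
      inter_mem (mem_nhdsWithin_of_mem_nhds (ball_mem_nhds p hr)) self_mem_nhdsWithin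
    filter_upwards [hmem] with z hz
    have hzp : z ≠ p := by simpa using hz.2
    have hdp : 0 < dist p z := by rw [dist_comm]; exact dist_pos.2 hzp
    rw [div_le_iff₀ hdp]
    have := hK.dist_le_mul z (hball hz.1) p hp
    rw [Real.dist_eq] at this
    rwa [dist_comm] at this
  -- the segment estimate
  have seg : ∀ (σ : ℝ → X) (a b : ℝ), a ≤ b →
      (∀ s ∈ Set.Icc a b, ∀ t ∈ Set.Icc a b, dist (σ s) (σ t) = |s - t|) →
      (∀ t ∈ Set.Ico a b, σ t ∈ V) → σ b ∈ closure V →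
      |u (σ b) - u (σ a)| ≤ L * (b - a) := by
    intro σ a b hab hiso hIco hbcl
    have hσcont : ContinuousOn σ (Set.Icc a b) := by
      refine (LipschitzOnWith.of_dist_le_mul (K := 1) ?_).continuousOn
      intro s hs t ht
      rw [hiso s hs t ht, NNReal.coe_one, one_mul, Real.dist_eq]
    have hcl : ∀ t ∈ Set.Icc a b, σ t ∈ closure V := by
      intro t ht
      rcases lt_or_eq_of_le ht.2 with h | h
      · exact subset_closure (hIco t ⟨ht.1, h⟩)
      · rw [h]; exact hbcl
    have hfc : ContinuousOn (fun t => u (σ t)) (Set.Icc a b) := by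
      intro t ht
      exact (contAt (σ t) (hcl t ht)).comp_continuousWithinAt (hσcont t ht)
    refine key_oneDim hab hL0 hfc ?_
    intro t ht ε hε
    have hpV : σ t ∈ V := hIco t ht
    have hpt : ptLip u (σ t) ≤ L := hmin V hVo hVcl hVcomp _ hpV
    obtain ⟨δ, hδ, hδ'⟩ := ptLip_eps (hnear (σ t) (hVU hpV)) hpt hε
    refine ⟨δ, hδ, fun s hs hts hsδ => ?_⟩
    have htIcc : t ∈ Set.Icc a b := ⟨ht.1, ht.2.le⟩
    have hdist : dist (σ t) (σ s) = s - t := by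
      rw [hiso t htIcc s hs, abs_sub_comm, abs_of_nonneg (by linarith)]
    have hne : σ s ≠ σ t := by
      intro h
      have := hdist
      rw [h, dist_self] at this
      linarith
    have := hδ' (σ s) hne (by rw [hdist]; linarith)
    rwa [hdist] at this
  refine le_antisymm ?_ ?_
  · -- hard direction
    rw [lipOn]
    refine Real.sSup_le ?_ hL0
    rintro r ⟨x, hx, y, hy, hxy, rfl⟩
    have hdp : 0 < dist x y := dist_pos.2 hxy
    rw [div_le_iff₀ hdp]
    obtain ⟨γ, hγ0, hγD, hγiso⟩ := hgeo x y
    set D := dist x y with hDdef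
    have hγcont : ContinuousOn γ (Set.Icc 0 D) := by
      refine (LipschitzOnWith.of_dist_le_mul (K := 1) ?_).continuousOn
      intro s hs t ht
      rw [hγiso s hs t ht, NNReal.coe_one, one_mul, Real.dist_eq]
    set S := Set.Icc (0:ℝ) D ∩ γ ⁻¹' Vᶜ with hSdef
    have hSclosed : IsClosed S :=
      ContinuousOn.preimage_isClosed_of_isClosed hγcont isClosed_Icc hVo.isClosed_compl
    by_cases hS : S.Nonempty
    · have hSbdb : BddBelow S := ⟨0, fun t ht => ht.1.1⟩
      have hSbda : BddAbove S := ⟨D, fun t ht => ht.1.2⟩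
      set s₁ := sInf S with hs₁def
      set s₂ := sSup S with hs₂def
      have hs₁S : s₁ ∈ S := hSclosed.csInf_mem hS hSbdb
      have hs₂S : s₂ ∈ S := hSclosed.csSup_mem hS hSbda
      have hs₁₂ : s₁ ≤ s₂ := csInf_le_csSup hS hSbdb hSbda
      have hγs₁V : γ s₁ ∉ V := hs₁S.2
      have hγs₂V : γ s₂ ∉ V := hs₂S.2
      have hs₁pos : 0 < s₁ := by
        rcases lt_or_eq_of_le hs₁S.1.1 with h | h
        · exact h
        · exfalso; apply hγs₁V; rw [← h, hγ0]; exact hx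
      have hs₂lt : s₂ < D := by
        rcases lt_or_eq_of_le hs₂S.1.2 with h | h
        · exact h
        · exfalso; apply hγs₂V; rw [h, hγD]; exact hy
      have hIco1 : ∀ t ∈ Set.Ico (0:ℝ) s₁, γ t ∈ V := by
        intro t ht
        by_contra hcon
        have : t ∈ S := ⟨⟨ht.1, le_trans ht.2.le hs₁S.1.2⟩, hcon⟩
        exact absurd (csInf_le hSbdb this) (not_le.2 ht.2)
      have hIoc2 : ∀ t, s₂ < t → t ≤ D → γ t ∈ V := by
        intro t h1 h2
        by_contra hcon
        have : t ∈ S := ⟨⟨le_trans hs₂S.1.1 h1.le, h2⟩, hcon⟩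
        exact absurd (le_csSup hSbda this) (not_le.2 h1)
      have hs₁Icc : s₁ ∈ Set.Icc (0:ℝ) D := hs₁S.1
      have hs₂Icc : s₂ ∈ Set.Icc (0:ℝ) D := hs₂S.1
      -- γ s₁ ∈ closure V
      have hcl1 : γ s₁ ∈ closure V := by
        rw [Metric.mem_closure_iff]
        intro ε hε
        set t := s₁ - min ε s₁ / 2 with htdef
        have hmin' : 0 < min ε s₁ := lt_min hε hs₁pos
        have ht1 : t ∈ Set.Ico (0:ℝ) s₁ := by
          constructor
          · have : min ε s₁ ≤ s₁ := min_le_right _ _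
            simp only [htdef]; linarith
          · simp only [htdef]; linarith
        refine ⟨γ t, hIco1 t ht1, ?_⟩
        have htIcc : t ∈ Set.Icc (0:ℝ) D := ⟨ht1.1, le_trans ht1.2.le hs₁Icc.2⟩
        rw [hγiso s₁ hs₁Icc t htIcc]
        have : min ε s₁ ≤ ε := min_le_left _ _
        rw [abs_of_nonneg (by simp only [htdef]; linarith)]
        simp only [htdef]; linarith
      -- γ s₂ ∈ closure V
      have hcl2 : γ s₂ ∈ closure V := by
        rw [Metric.mem_closure_iff]
        intro ε hε
        set t := s₂ + min ε (D - s₂) / 2 with htdef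
        have hmin' : 0 < min ε (D - s₂) := lt_min hε (by linarith)
        have ht1 : s₂ < t := by simp only [htdef]; linarith
        have ht2 : t ≤ D := by
          have : min ε (D - s₂) ≤ D - s₂ := min_le_right _ _
          simp only [htdef]; linarith
        refine ⟨γ t, hIoc2 t ht1 ht2, ?_⟩
        have htIcc : t ∈ Set.Icc (0:ℝ) D := ⟨by linarith [hs₂Icc.1], ht2⟩
        rw [hγiso s₂ hs₂Icc t htIcc]
        have : min ε (D - s₂) ≤ ε := min_le_left _ _
        rw [abs_of_nonpos (by simp only [htdef]; linarith)]
        simp only [htdef]; linarith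
      have hfr1 : γ s₁ ∈ frontier V := by
        rw [hVo.frontier_eq]; exact ⟨hcl1, hγs₁V⟩
      have hfr2 : γ s₂ ∈ frontier V := by
        rw [hVo.frontier_eq]; exact ⟨hcl2, hγs₂V⟩
      -- boundary estimate
      have hbound : |u (γ s₁) - u (γ s₂)| ≤ L * (s₂ - s₁) := by
        rcases eq_or_lt_of_le hs₁₂ with h | h
        · rw [h]; simp
        · have hd12 : dist (γ s₁) (γ s₂) = s₂ - s₁ := by
            rw [hγiso s₁ hs₁Icc s₂ hs₂Icc, abs_sub_comm, abs_of_nonneg (by linarith)]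
          have hne : γ s₁ ≠ γ s₂ := by
            intro hcon
            rw [hcon, dist_self] at hd12; linarith
          have hmem : |u (γ s₁) - u (γ s₂)| / dist (γ s₁) (γ s₂) ∈
              { r : ℝ | ∃ a ∈ frontier V, ∃ b ∈ frontier V, a ≠ b ∧
                r = |u a - u b| / dist a b } := ⟨γ s₁, hfr1, γ s₂, hfr2, hne, rfl⟩
          have hle : |u (γ s₁) - u (γ s₂)| / dist (γ s₁) (γ s₂) ≤ L :=
            le_csSup hbddF hmem
          rw [div_le_iff₀ (by rw [hd12]; linarith)] at hle
          rwa [hd12] at hle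
      -- first segment
      have h1 : |u (γ s₁) - u (γ 0)| ≤ L * (s₁ - 0) := by
        refine seg γ 0 s₁ hs₁pos.le ?_ hIco1 hcl1
        intro s hs t ht
        exact hγiso s ⟨hs.1, le_trans hs.2 hs₁Icc.2⟩ t ⟨ht.1, le_trans ht.2 hs₁Icc.2⟩
      -- last segment (reflected)
      have h3 : |u (γ s₂) - u (γ D)| ≤ L * (D - s₂) := by
        have := seg (fun t => γ (s₂ + D - t)) s₂ D hs₂lt.le ?_ ?_ ?_
        · simpa using this
        · intro s hs t ht
          have hs' : s₂ + D - s ∈ Set.Icc (0:ℝ) D := by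
            constructor <;> [linarith [hs.2, hs₂Icc.1]; linarith [hs.1]]
          have ht' : s₂ + D - t ∈ Set.Icc (0:ℝ) D := by
            constructor <;> [linarith [ht.2, hs₂Icc.1]; linarith [ht.1]]
          rw [hγiso _ hs' _ ht']
          rw [show s₂ + D - s - (s₂ + D - t) = t - s by ring, abs_sub_comm]
        · intro t ht
          exact hIoc2 (s₂ + D - t) (by linarith [ht.2]) (by linarith [ht.1])
        · simpa using hcl2
      rw [hγ0] at h1
      rw [hγD] at h3
      calc |u x - u y| ≤ |u x - u (γ s₁)| + |u (γ s₁) - u y| := abs_sub_le _ _ _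
        _ ≤ |u x - u (γ s₁)| + (|u (γ s₁) - u (γ s₂)| + |u (γ s₂) - u y|) := by
            linarith [abs_sub_le (u (γ s₁)) (u (γ s₂)) (u y)]
        _ ≤ L * s₁ + (L * (s₂ - s₁) + L * (D - s₂)) := by
            rw [abs_sub_comm] at h1
            linarith
        _ = L * D := by ring
    · -- geodesic entirely inside V
      rw [Set.not_nonempty_iff_eq_empty] at hS
      have hall : ∀ t ∈ Set.Icc (0:ℝ) D, γ t ∈ V := by
        intro t ht
        by_contra hcon
        have : t ∈ S := ⟨ht, hcon⟩
        rw [hS] at this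
        exact this
      have := seg γ 0 D hdp.le hγiso
        (fun t ht => hall t ⟨ht.1, ht.2.le⟩)
        (subset_closure (by rw [hγD]; exact hy))
      rw [hγ0, hγD, abs_sub_comm] at this
      simpa using this
  · -- easy direction
    rw [hLdef, lipOn]
    refine Real.sSup_le ?_ hM0
    rintro r ⟨x, hx, y, hy, hxy, rfl⟩
    have hxcl : x ∈ closure V := frontier_subset_closure hx
    have hycl : y ∈ closure V := frontier_subset_closure hy
    obtain ⟨xn, hxn, hxnt⟩ := mem_closure_iff_seq_limit.1 hxcl
    obtain ⟨yn, hyn, hynt⟩ := mem_closure_iff_seq_limit.1 hycl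
    have hdt : Tendsto (fun n => dist (xn n) (yn n)) atTop (nhds (dist x y)) :=
      hxnt.dist hynt
    have hut : Tendsto (fun n => |u (xn n) - u (yn n)|) atTop (nhds (|u x - u y|)) := by
      exact (((contAt x hxcl).tendsto.comp hxnt).sub
        ((contAt y hycl).tendsto.comp hynt)).abs
    have hdp : (0:ℝ) < dist x y := dist_pos.2 hxy
    have hq : Tendsto (fun n => |u (xn n) - u (yn n)| / dist (xn n) (yn n)) atTop
        (nhds (|u x - u y| / dist x y)) := hut.div hdt (ne_of_gt hdp)
    have hev : ∀ᶠ n in atTop, 0 < dist (xn n) (yn n) :=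
      hdt.eventually (eventually_gt_nhds hdp)
    have hle : ∀ᶠ n in atTop,
        |u (xn n) - u (yn n)| / dist (xn n) (yn n) ≤ lipOn u V := by
      filter_upwards [hev] with n hn
      have hne : xn n ≠ yn n := by
        intro h; rw [h, dist_self] at hn; exact lt_irrefl _ hn
      exact le_csSup hbddV ⟨xn n, hxn n, yn n, hyn n, hne, rfl⟩
    exact le_of_tendsto hq hle
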